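/- Let d ≥ 1, let S be a unit d-sphere (total surface area 1), and let a, b ∈ S be distinct points with orthodromic distance δ(a,b). Then every spherical cap C of S whose boundary relative to S contains both a and b has surface area at least A_d(δ(a,b)); that is, the smallest-area spherical cap whose boundary passes through a and b is the cap having orthodromic diameter δ(a,b). -/

import Mathlib

/-!
STATEMENT 19: On a unit `d`-sphere (a `d`-dimensional sphere in `ℝ^{d+1}` of
total surface area 1), for distinct points `a, b` on the sphere, every spherical
cap whose boundary relative to the sphere contains both `a` and `b` has surface
area at least `A_d(δ(a,b))`: the smallest-area cap whose boundary passes through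
`a` and `b` is the one of orthodromic diameter `δ(a,b)`.

The normalized surface measure on the sphere of radius `r` centered at the
origin is formalized as a probability measure `μ` concentrated on the sphere and
invariant under all linear isometries of the ambient space; a spherical cap is
`{p | c ≤ ⟪v, p⟫}` intersected with the sphere (on which `μ` is concentrated),
its boundary relative to the sphere is cut out by the hyperplane
`{p | ⟪v, p⟫ = c}`; the orthodromic distance of `a, b` is `r * angle a b`;
`A_d(x)` (`capArea μ r x`) is the `μ`-measure of a cap of orthodromic diameter
`x` (half-angle `x/(2r)`); the unit-area condition pins down the radius `r`.
-/

noncomputable section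

open MeasureTheory Real

local notation "⟪" x ", " y "⟫" => @inner ℝ _ _ x y

/-- `A_d(x)`: the measure (w.r.t. the normalized surface measure `μ`) of a spherical
cap of orthodromic diameter `x`, i.e. of half-angle `x/(2r)`, on the sphere of
radius `r` centered at the origin. -/
def capArea {m : ℕ} [NeZero m] (μ : Measure (EuclideanSpace ℝ (Fin m)))
    (r x : ℝ) : ℝ :=
  (μ {p | r * Real.cos (x / (2 * r)) ≤ ⟪EuclideanSpace.single (0 : Fin m) (1 : ℝ), p⟫}).toReal

theorem smallest_cap_through_two_points
    (d : ℕ) (hd : 1 ≤ d)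
    (r : ℝ) (hr : 0 < r)
    -- the sphere of radius `r` in `ℝ^{d+1}` has total surface area 1
    (harea : ((d : ℝ) + 1) * (Real.sqrt π ^ (d + 1) / Real.Gamma (((d : ℝ) + 1) / 2 + 1))
        * r ^ d = 1)
    -- `μ` is the uniform (normalized surface) probability measure on the sphere:
    (μ : Measure (EuclideanSpace ℝ (Fin (d + 1)))) [IsProbabilityMeasure μ]
    (hsupp : μ (Metric.sphere (0 : EuclideanSpace ℝ (Fin (d + 1))) r) = 1)
    (hinv : ∀ g : EuclideanSpace ℝ (Fin (d + 1)) ≃ₗᵢ[ℝ] EuclideanSpace ℝ (Fin (d + 1)),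
      Measure.map g μ = μ)
    (a b : EuclideanSpace ℝ (Fin (d + 1)))
    (ha : a ∈ Metric.sphere (0 : EuclideanSpace ℝ (Fin (d + 1))) r)
    (hb : b ∈ Metric.sphere (0 : EuclideanSpace ℝ (Fin (d + 1))) r)
    (hab : a ≠ b)
    -- an arbitrary spherical cap `{p | c ≤ ⟪v, p⟫}` whose boundary contains `a`, `b`:
    (v : EuclideanSpace ℝ (Fin (d + 1))) (c : ℝ) (hv : v ≠ 0)
    (hva : ⟪v, a⟫ = c) (hvb : ⟪v, b⟫ = c) :
    capArea μ r (r * InnerProductGeometry.angle a b) ≤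
      (μ {p | c ≤ ⟪v, p⟫}).toReal := by

  classical
  set θ := InnerProductGeometry.angle a b with hθ
  have hna : ‖a‖ = r := by simpa using mem_sphere_zero_iff_norm.mp ha
  have hnb : ‖b‖ = r := by simpa using mem_sphere_zero_iff_norm.mp hb
  have hrne : r ≠ 0 := ne_of_gt hr
  have hθ0 : 0 ≤ θ := InnerProductGeometry.angle_nonneg a b
  have hθpi : θ ≤ π := InnerProductGeometry.angle_le_pi a b
  have hcoshalf : 0 ≤ Real.cos (θ / 2) := by
    apply Real.cos_nonneg_of_mem_Icc
    constructor <;> [linarith [Real.pi_pos]; linarith]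
  -- inner product of a and b
  have hinner : ⟪a, b⟫ = r * r * Real.cos θ := by
    have h := InnerProductGeometry.cos_angle a b
    rw [hna, hnb, ← hθ] at h
    rw [h, mul_comm (r * r), div_mul_cancel₀]
    positivity
  have hcossq : Real.cos (θ / 2) ^ 2 = 1 / 2 + Real.cos θ / 2 := by
    have h := Real.cos_sq (θ / 2)
    rwa [show 2 * (θ / 2) = θ by ring] at h
  -- norm of a + b
  have hsq : ‖a + b‖ ^ 2 = (2 * r * Real.cos (θ / 2)) ^ 2 := by
    have h1 : ‖a + b‖ ^ 2 = ‖a‖ ^ 2 + 2 * ⟪a, b⟫ + ‖b‖ ^ 2 := norm_add_sq_real a b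
    rw [h1, hna, hnb, hinner]
    nlinarith [hcossq]
  have hnab : ‖a + b‖ = 2 * r * Real.cos (θ / 2) := by
    have h2 : (0:ℝ) ≤ 2 * r * Real.cos (θ / 2) := by positivity
    calc ‖a + b‖ = Real.sqrt (‖a + b‖ ^ 2) := (Real.sqrt_sq (norm_nonneg _)).symm
      _ = Real.sqrt ((2 * r * Real.cos (θ / 2)) ^ 2) := by rw [hsq]
      _ = 2 * r * Real.cos (θ / 2) := Real.sqrt_sq h2
  -- Cauchy-Schwarz: c / ‖v‖ ≤ r * cos (θ/2)
  have hvpos : (0:ℝ) < ‖v‖ := norm_pos_iff.mpr hv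
  have hcs : ⟪v, a + b⟫ ≤ ‖v‖ * ‖a + b‖ := real_inner_le_norm v (a + b)
  have h2c : ⟪v, a + b⟫ = 2 * c := by rw [inner_add_right, hva, hvb]; ring
  have hkey : c / ‖v‖ ≤ r * Real.cos (θ / 2) := by
    rw [div_le_iff₀ hvpos]
    rw [h2c, hnab] at hcs
    nlinarith
  -- the isometry sending the normalized v to e₀
  set e₀ : EuclideanSpace ℝ (Fin (d + 1)) := EuclideanSpace.single (0 : Fin (d + 1)) (1 : ℝ)
    with he₀
  set u : EuclideanSpace ℝ (Fin (d + 1)) := ‖v‖⁻¹ • v with hu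
  have hnu : ‖u‖ = ‖e₀‖ := by
    rw [hu, he₀, norm_smul, EuclideanSpace.norm_single]
    simp [abs_of_pos (inv_pos.mpr hvpos), inv_mul_cancel₀ (ne_of_gt hvpos)]
  set g : EuclideanSpace ℝ (Fin (d + 1)) ≃ₗᵢ[ℝ] EuclideanSpace ℝ (Fin (d + 1)) :=
    Submodule.reflection (ℝ ∙ (u - e₀))ᗮ with hg
  have hgu : g u = e₀ := Submodule.reflection_sub hnu
  set S : Set (EuclideanSpace ℝ (Fin (d + 1))) := {q | c / ‖v‖ ≤ ⟪e₀, q⟫} with hS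
  have hSmeas : MeasurableSet S :=
    measurableSet_le measurable_const (Continuous.measurable (continuous_const.inner continuous_id))
  have hpre : {p : EuclideanSpace ℝ (Fin (d + 1)) | c ≤ ⟪v, p⟫} = (⇑g) ⁻¹' S := by
    ext p
    simp only [Set.mem_setOf_eq, Set.mem_preimage, hS]
    have h3 : ⟪e₀, g p⟫ = ⟪u, p⟫ := by rw [← hgu]; exact g.inner_map_map u p
    rw [h3, hu, real_inner_smul_left, inv_mul_eq_div]
    exact (div_le_div_iff_of_pos_right hvpos).symm
  have hmeq : μ {p : EuclideanSpace ℝ (Fin (d + 1)) | c ≤ ⟪v, p⟫} = μ S := by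
    rw [hpre, ← Measure.map_apply g.continuous.measurable hSmeas, hinv g]
  rw [hmeq]
  unfold capArea
  have harg : r * θ / (2 * r) = θ / 2 := by field_simp
  rw [harg]
  have hsub : {p : EuclideanSpace ℝ (Fin (d + 1)) |
      r * Real.cos (θ / 2) ≤ ⟪EuclideanSpace.single (0 : Fin (d + 1)) (1 : ℝ), p⟫} ⊆ S := by
    intro p hp
    simp only [Set.mem_setOf_eq] at hp ⊢
    exact le_trans hkey hp
  exact ENNReal.toReal_mono (measure_ne_top μ S) (measure_mono hsub)
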